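/- Let (π, V) be an irreducible representation of the free algebra A on n generators with π(e_i) ≠ 0 for at least one i. Then V is full: the only complete submodule of V is V itself; and V is nondegenerate: for every nonzero v ∈ V and every m there is a word p of length ≥ m with v·p ≠ 0. -/
import Mathlib


/-- The action of a word `p` (a list of generator indices) on a representation of the
free algebra on `n` generators given by the endomorphisms `T i`: the first letter acts first. -/
def actWord {k V : Type*} [Field k] [AddCommGroup V] [Module k V] {n : ℕ}
    (T : Fin n → V →ₗ[k] V) : List (Fin n) → V →ₗ[k] V
  | [] => LinearMap.id
  | i :: p => (actWord T p).comp (T i)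

/-- A subspace is invariant under the action of each generator. -/
def RepInvariant {k V : Type*} [Field k] [AddCommGroup V] [Module k V] {n : ℕ}
    (T : Fin n → V →ₗ[k] V) (W : Submodule k V) : Prop :=
  ∀ i : Fin n, ∀ w ∈ W, T i w ∈ W

/-- A submodule `W ⊆ V` is complete: every `v ∈ V` is sent into `W` by all sufficiently
long words. -/
def RepComplete {k V : Type*} [Field k] [AddCommGroup V] [Module k V] {n : ℕ}
    (T : Fin n → V →ₗ[k] V) (W : Submodule k V) : Prop :=
  ∀ v : V, ∃ m : ℕ, 1 ≤ m ∧ ∀ p : List (Fin n), m ≤ p.length → actWord T p v ∈ W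

lemma exists_gen_ne_zero {k V : Type*} [Field k] [AddCommGroup V] [Module k V] {n : ℕ}
    (T : Fin n → V →ₗ[k] V)
    (hirr : ∀ W : Submodule k V, RepInvariant T W → W = ⊥ ∨ W = ⊤)
    (hnz : ∃ i : Fin n, T i ≠ 0) :
    ∀ v : V, v ≠ 0 → ∃ j : Fin n, T j v ≠ 0 := by
  set U : Submodule k V := ⨅ j, LinearMap.ker (T j) with hU
  have hinv : RepInvariant T U := by
    intro i w hw
    simp only [hU, Submodule.mem_iInf, LinearMap.mem_ker] at hw ⊢
    intro j
    rw [hw i]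
    exact map_zero _
  rcases hirr U hinv with h | h
  · intro v hv
    by_contra hc
    push_neg at hc
    have : v ∈ U := by
      simp only [hU, Submodule.mem_iInf, LinearMap.mem_ker]
      exact hc
    rw [h] at this
    exact hv this
  · obtain ⟨i, hi⟩ := hnz
    exfalso
    apply hi
    ext v
    have : v ∈ U := h ▸ Submodule.mem_top
    simp only [hU, Submodule.mem_iInf, LinearMap.mem_ker] at this
    simpa using this i

lemma exists_word_ne_zero {k V : Type*} [Field k] [AddCommGroup V] [Module k V] {n : ℕ}
    (T : Fin n → V →ₗ[k] V)
    (hgen : ∀ v : V, v ≠ 0 → ∃ j : Fin n, T j v ≠ 0) :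
    ∀ m : ℕ, ∀ v : V, v ≠ 0 → ∃ p : List (Fin n), p.length = m ∧ actWord T p v ≠ 0 := by
  intro m
  induction m with
  | zero => intro v hv; exact ⟨[], rfl, hv⟩
  | succ m ih =>
    intro v hv
    obtain ⟨j, hj⟩ := hgen v hv
    obtain ⟨p, hp, hpv⟩ := ih (T j v) hj
    exact ⟨j :: p, by simp [hp], hpv⟩

/-- A nonzero irreducible representation of the free algebra is full and nondegenerate. -/
theorem stmt11 {k V : Type*} [Field k] [AddCommGroup V] [Module k V] {n : ℕ} (hn : 2 ≤ n)
    (T : Fin n → V →ₗ[k] V)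
    (hne : ∃ v : V, v ≠ 0)
    (hirr : ∀ W : Submodule k V, RepInvariant T W → W = ⊥ ∨ W = ⊤)
    (hnz : ∃ i : Fin n, T i ≠ 0) :
    (∀ W : Submodule k V, RepInvariant T W → RepComplete T W → W = ⊤) ∧
      ∀ v : V, v ≠ 0 → ∀ m : ℕ,
        ∃ p : List (Fin n), m ≤ p.length ∧ actWord T p v ≠ 0 := by
  have hgen := exists_gen_ne_zero T hirr hnz
  have hword := exists_word_ne_zero T hgen
  constructor
  · intro W hWinv hWcomp
    rcases hirr W hWinv with h | h
    · exfalso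
      obtain ⟨v, hv⟩ := hne
      obtain ⟨m, -, hm⟩ := hWcomp v
      obtain ⟨p, hp, hpv⟩ := hword m v hv
      have := hm p (le_of_eq hp.symm)
      rw [h] at this
      exact hpv this
    · exact h
  · intro v hv m
    obtain ⟨p, hp, hpv⟩ := hword m v hv
    exact ⟨p, le_of_eq hp.symm, hpv⟩
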